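/- Suppose a joint (possibly correlated) per-state policy π : S → Δ(Π_i A_i) and its per-player marginals π_i : S → Δ(A_i) are given, and the transition kernel satisfies P(s'|s, a) = Σ_{i∈C} F_i(s'|s, a_i) for some subset C of players. Then the induced state-transition kernels coincide: Σ_a P(s'|s,a) π(a|s) = Σ_a P(s'|s,a) π̂(a|s), where π̂(·|s) = Π_i π_i(·|s) is the product of marginals. In particular, the discounted state visitation measures of π and π̂ from any initial state are equal. -/
import Mathlib

lemma marg_apply {N : Type*} [Fintype N] [DecidableEq N] {A : N → Type*} [∀ i, Fintype (A i)]
    [∀ i, DecidableEq (A i)] (i : N) (g : A i → ℝ) (μ : (∀ j, A j) → ℝ) :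
    ∑ a : ∀ j, A j, g (a i) * μ a
      = ∑ c : A i, g c * ∑ b : ∀ j, A j, if b i = c then μ b else 0 := by
  simp only [Finset.mul_sum, mul_ite, mul_zero]
  rw [Finset.sum_comm]
  refine Finset.sum_congr rfl fun b _ => ?_
  simp

lemma marg_total {N : Type*} [Fintype N] [DecidableEq N] {A : N → Type*} [∀ i, Fintype (A i)]
    [∀ i, DecidableEq (A i)] (i : N) (μ : (∀ j, A j) → ℝ) :
    ∑ c : A i, (∑ b : ∀ j, A j, if b i = c then μ b else 0) = ∑ b : ∀ j, A j, μ b := by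
  rw [Finset.sum_comm]
  refine Finset.sum_congr rfl fun b _ => ?_
  simp

lemma prod_marg_apply {N : Type*} [Fintype N] [DecidableEq N] {A : N → Type*}
    [∀ i, Fintype (A i)] [∀ i, DecidableEq (A i)] (i : N) (g : A i → ℝ)
    (M : ∀ j, A j → ℝ) (hM : ∀ j, ∑ x, M j x = 1) :
    ∑ a : ∀ j, A j, g (a i) * ∏ j, M j (a j) = ∑ c : A i, g c * M i c := by
  set G : ∀ j, A j → ℝ := Function.update M i (fun x => g x * M i x) with hG
  have claim : ∀ a : ∀ j, A j, ∏ j, G j (a j) = g (a i) * ∏ j, M j (a j) := by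
    intro a
    rw [Finset.prod_eq_mul_prod_sdiff_singleton_of_mem (Finset.mem_univ i) (fun j => G j (a j)),
        Finset.prod_eq_mul_prod_sdiff_singleton_of_mem (Finset.mem_univ i) (fun j => M j (a j))]
    have h1 : G i (a i) = g (a i) * M i (a i) := by simp [hG]
    have h2 : ∀ j ∈ Finset.univ \ {i}, G j (a j) = M j (a j) := by
      intro j hj
      simp only [Finset.mem_sdiff, Finset.mem_singleton] at hj
      simp [hG, Function.update_of_ne hj.2]
    rw [Finset.prod_congr rfl h2, h1]
    ring
  calc ∑ a : ∀ j, A j, g (a i) * ∏ j, M j (a j)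
      = ∑ a : ∀ j, A j, ∏ j, G j (a j) := by
        exact (Finset.sum_congr rfl fun a _ => (claim a)).symm
    _ = ∏ j, ∑ x : A j, G j x := by
        rw [Finset.prod_univ_sum]
        simp
    _ = ∑ c : A i, g c * M i c := by
        rw [Finset.prod_eq_single i]
        · simp [hG]
        · intro j _ hj
          simp [hG, Function.update_of_ne hj, hM j]
        · simp

/-- Iterated application of a state-transition kernel `K : S → S → ℝ`. -/
def iterK {S : Type*} [Fintype S] [DecidableEq S] (K : S → S → ℝ) : ℕ → S → S → ℝ
  | 0, s, s' => if s = s' then 1 else 0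
  | (t + 1), s, s' => ∑ u, K s u * iterK K t u s'

/-- If the transitions decompose as `P(s'|s,a) = ∑_{i∈C} F_i(s'|s,a_i)`, then a joint per-state
policy and the product of its per-player marginals induce the same state-transition kernel; in
particular their discounted state visitation measures coincide. -/
theorem marginalization_preserves_kernel {S N : Type*} [Fintype S] [DecidableEq S]
    [Fintype N] [DecidableEq N]
    (A : N → Type*) [∀ i, Fintype (A i)] [∀ i, Nonempty (A i)] [∀ i, DecidableEq (A i)]
    (C : Finset N)
    (P : S → (∀ i, A i) → S → ℝ)
    (F : ∀ i, S → A i → S → ℝ)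
    (hP : ∀ s (a : ∀ i, A i) s', P s a s' = ∑ i ∈ C, F i s (a i) s')
    (π : S → (∀ i, A i) → ℝ)
    (hπnn : ∀ s a, 0 ≤ π s a) (hπsum : ∀ s, ∑ a, π s a = 1) :
    -- the induced kernels coincide
    (∀ s s', (∑ a : ∀ i, A i, P s a s' * π s a) =
      ∑ a : ∀ i, A i, P s a s' *
        ∏ i, (∑ b : ∀ k, A k, if b i = a i then π s b else 0)) ∧
    -- hence all t-step transition probabilities coincide
    (∀ (t : ℕ) (s s' : S),
      iterK (fun s s' => ∑ a : ∀ i, A i, P s a s' * π s a) t s s' =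
      iterK (fun s s' => ∑ a : ∀ i, A i, P s a s' *
        ∏ i, (∑ b : ∀ k, A k, if b i = a i then π s b else 0)) t s s') ∧
    -- and the discounted state visitation measures coincide
    (∀ (γ : ℝ), 0 < γ → γ < 1 → ∀ (s s'' : S),
      (1 - γ) * ∑' t : ℕ, γ ^ t *
        iterK (fun s s' => ∑ a : ∀ i, A i, P s a s' * π s a) t s s'' =
      (1 - γ) * ∑' t : ℕ, γ ^ t *
        iterK (fun s s' => ∑ a : ∀ i, A i, P s a s' *
          ∏ i, (∑ b : ∀ k, A k, if b i = a i then π s b else 0)) t s s'') := by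
  have key : ∀ s s', (∑ a : ∀ i, A i, P s a s' * π s a) =
      ∑ a : ∀ i, A i, P s a s' *
        ∏ i, (∑ b : ∀ k, A k, if b i = a i then π s b else 0) := by
    intro s s'
    set M : ∀ j, A j → ℝ := fun j c => ∑ b : ∀ k, A k, if b j = c then π s b else 0 with hMdef
    have hM : ∀ j, ∑ x, M j x = 1 := by
      intro j
      rw [hMdef]
      simp only
      rw [marg_total j (π s), hπsum s]
    have lhs_eq : (∑ a : ∀ i, A i, P s a s' * π s a)
        = ∑ i ∈ C, ∑ c : A i, F i s c s' * M i c := by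
      simp only [hP, Finset.sum_mul]
      rw [Finset.sum_comm]
      refine Finset.sum_congr rfl fun i _ => ?_
      exact marg_apply i (fun c => F i s c s') (π s)
    have rhs_eq : (∑ a : ∀ i, A i, P s a s' * ∏ i, M i (a i))
        = ∑ i ∈ C, ∑ c : A i, F i s c s' * M i c := by
      simp only [hP, Finset.sum_mul]
      rw [Finset.sum_comm]
      refine Finset.sum_congr rfl fun i _ => ?_
      exact prod_marg_apply i (fun c => F i s c s') M hM
    rw [lhs_eq, ← rhs_eq]
  have iter_eq : ∀ (t : ℕ) (s s' : S),
      iterK (fun s s' => ∑ a : ∀ i, A i, P s a s' * π s a) t s s' =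
      iterK (fun s s' => ∑ a : ∀ i, A i, P s a s' *
        ∏ i, (∑ b : ∀ k, A k, if b i = a i then π s b else 0)) t s s' := by
    intro t
    induction t with
    | zero => intro s s'; rfl
    | succ t ih =>
      intro s s'
      simp only [iterK]
      refine Finset.sum_congr rfl fun u _ => ?_
      rw [key s u, ih u s']
  refine ⟨key, iter_eq, ?_⟩
  intro γ _ _ s s''
  congr 1
  exact tsum_congr fun t => by rw [iter_eq t s s'']
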